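/- (Theorem 2, supermodularity.) Let L be the Laplacian matrix of a connected weighted undirected graph on n ≥ 2 vertices, let v be a vertex, and let E_v be a finite set of candidate new edges, each edge e ∈ E_v joining v to some vertex u_e ≠ v and carrying a weight w(e) > 0. For S ⊆ E_v, define L(S) := L + Σ_{e∈S} w(e) b_{u_e,v} b_{u_e,v}^T and R(S) := Tr( (L(S)_v)^{-1} ). Then R is supermodular: for all S ⊆ T ⊆ E_v and every e ∈ E_v \ T, R(T) − R(T ∪ {e}) ≤ R(S) − R(S ∪ {e}). -/

import Mathlib

open Matrix

set_option linter.unusedSectionVars false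
set_option maxHeartbeats 1000000

section Aux


variable {m : Type*} [Fintype m] [DecidableEq m]

private lemma vecMulVec_mulVec' (x y z : m → ℝ) :
    vecMulVec x y *ᵥ z = (y ⬝ᵥ z) • x := by
  ext i
  simp only [mulVec, dotProduct, vecMulVec_apply, Pi.smul_apply, smul_eq_mul]
  rw [Finset.sum_mul]
  exact Finset.sum_congr rfl fun j _ => by ring

private lemma mul_vecMulVec' (B : Matrix m m ℝ) (u w : m → ℝ) :
    B * vecMulVec u w = vecMulVec (B *ᵥ u) w := by
  ext i j
  simp only [mul_apply, vecMulVec_apply, mulVec, dotProduct]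
  rw [Finset.sum_mul]
  exact Finset.sum_congr rfl fun k _ => by ring

private lemma vecMulVec_mul' (u w : m → ℝ) (B : Matrix m m ℝ) :
    vecMulVec u w * B = vecMulVec u (w ᵥ* B) := by
  ext i j
  simp only [mul_apply, vecMulVec_apply, vecMul, dotProduct]
  rw [Finset.mul_sum]
  exact Finset.sum_congr rfl fun k _ => by ring

private lemma vecMulVec_mul_vecMulVec' (u w p q : m → ℝ) :
    vecMulVec u w * vecMulVec p q = (w ⬝ᵥ p) • vecMulVec u q := by
  ext i j
  simp only [mul_apply, vecMulVec_apply, Matrix.smul_apply, dotProduct, smul_eq_mul]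
  rw [Finset.sum_mul]
  exact Finset.sum_congr rfl fun k _ => by ring

private lemma trace_vecMulVec' (z : m → ℝ) : (vecMulVec z z).trace = z ⬝ᵥ z := by
  simp [trace, diag, vecMulVec_apply, dotProduct]

private lemma star_id (z : m → ℝ) : star z = z := funext fun _ => star_trivial _

private lemma vecMulVec_psd (x : m → ℝ) {c : ℝ} (hc : 0 ≤ c) :
    (c • vecMulVec x x).PosSemidef := by
  refine posSemidef_iff_dotProduct_mulVec.mpr ⟨?_, ?_⟩
  · ext i j
    simp [conjTranspose_apply, vecMulVec_apply, mul_comm]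
  · intro z
    rw [star_id, smul_mulVec, vecMulVec_mulVec', dotProduct_smul, dotProduct_smul]
    have : z ⬝ᵥ x = x ⬝ᵥ z := dotProduct_comm _ _
    simp only [smul_eq_mul, this]
    nlinarith [sq_nonneg (x ⬝ᵥ z)]


private lemma sign_lemma {A : Matrix m m ℝ} (hA : A.PosDef)
    (hoff : ∀ i j, i ≠ j → A i j ≤ 0)
    {z : m → ℝ} (hz : ∀ i, z i < 0 → 0 ≤ (A *ᵥ z) i) : ∀ i, 0 ≤ z i := by
  set zm : m → ℝ := fun k => max (-(z k)) 0 with hzmdef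
  set zp : m → ℝ := fun k => max (z k) 0 with hzpdef
  have hzm0 : ∀ k, 0 ≤ zm k := fun k => le_max_right _ _
  have hzp0 : ∀ k, 0 ≤ zp k := fun k => le_max_right _ _
  have hzmzp : ∀ k, zm k * zp k = 0 := by
    intro k
    rcases le_total 0 (z k) with h | h
    · have : zm k = 0 := max_eq_right (by linarith)
      rw [this, zero_mul]
    · have : zp k = 0 := max_eq_right h
      rw [this, mul_zero]
  have hsplit : zp = z + zm := by
    funext k
    rcases le_total 0 (z k) with h | h
    · have h1 : zm k = 0 := max_eq_right (by linarith)
      have h2 : zp k = z k := max_eq_left h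
      simp [h1, h2]
    · have h1 : zm k = -(z k) := max_eq_left (by linarith)
      have h2 : zp k = 0 := max_eq_right h
      simp [h1, h2]
  have key1 : 0 ≤ zm ⬝ᵥ (A *ᵥ z) := by
    apply Finset.sum_nonneg
    intro k _
    by_cases hk : z k < 0
    · exact mul_nonneg (hzm0 k) (hz k hk)
    · have : zm k = 0 := max_eq_right (by push_neg at hk; linarith)
      rw [this, zero_mul]
  have key2 : zm ⬝ᵥ (A *ᵥ zp) ≤ 0 := by
    simp only [dotProduct, mulVec]
    apply Finset.sum_nonpos
    intro k _
    rw [Finset.mul_sum]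
    apply Finset.sum_nonpos
    intro l _
    by_cases hkl : k = l
    · subst hkl
      have : zm k * (A k k * zp k) = A k k * (zm k * zp k) := by ring
      rw [this, hzmzp k, mul_zero]
    · have h1 : A k l * zp l ≤ 0 := by
        have := mul_le_mul_of_nonneg_right (hoff k l hkl) (hzp0 l)
        simpa using this
      have := mul_le_mul_of_nonneg_left h1 (hzm0 k)
      simpa using this
  have key3 : zm ⬝ᵥ (A *ᵥ zm) ≤ 0 := by
    have h1 : A *ᵥ zp = A *ᵥ z + A *ᵥ zm := by rw [hsplit, mulVec_add]
    have h2 : zm ⬝ᵥ (A *ᵥ zp) = zm ⬝ᵥ (A *ᵥ z) + zm ⬝ᵥ (A *ᵥ zm) := by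
      rw [h1, dotProduct_add]
    linarith
  have hzm : zm = 0 := by
    by_contra h
    have := hA.dotProduct_mulVec_pos h
    rw [star_id] at this
    linarith
  intro i
  have : zm i = 0 := by rw [hzm]; rfl
  have : max (-(z i)) 0 = 0 := this
  nlinarith [le_max_left (-(z i)) (0:ℝ)]

private lemma stieltjes_inv_nonneg {A : Matrix m m ℝ} (hA : A.PosDef)
    (hoff : ∀ i j, i ≠ j → A i j ≤ 0) : ∀ i j, 0 ≤ A⁻¹ i j := by
  have hdet : IsUnit A.det := A.isUnit_iff_isUnit_det.mp hA.isUnit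
  intro i j
  have hz : A *ᵥ (fun i => A⁻¹ i j) = Pi.single j 1 := by
    have h1 : (fun i => A⁻¹ i j) = A⁻¹ *ᵥ Pi.single j 1 := by
      ext k; simp [mulVec_single]
    rw [h1, mulVec_mulVec, A.mul_nonsing_inv hdet, one_mulVec]
  refine sign_lemma (z := fun i => A⁻¹ i j) hA hoff (fun k _ => ?_) i
  rw [hz]
  rcases eq_or_ne k j with h | h
  · subst h; simp
  · simp [Pi.single_apply, h]

private lemma stieltjes_path_ineq {A : Matrix m m ℝ} (hA : A.PosDef)
    (hoff : ∀ i j, i ≠ j → A i j ≤ 0) (i k j : m) :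
    A⁻¹ i k * A⁻¹ k j ≤ A⁻¹ k k * A⁻¹ i j := by
  have hdet : IsUnit A.det := A.isUnit_iff_isUnit_det.mp hA.isUnit
  set M := A⁻¹ with hM
  have hMsym : ∀ a b, M a b = M b a := by
    intro a b
    have := hA.isHermitian.inv
    have h2 := congrFun (congrFun this a) b
    simpa [conjTranspose_apply] using h2.symm
  have hMinv : M.PosDef := hA.inv
  -- Cauchy-Schwarz like 2x2 minor: M k j ^ 2 ≤ M j j * M k k
  have hMkk : 0 < M k k := by
    have := hMinv.dotProduct_mulVec_pos (x := (Pi.single k 1 : m → ℝ)) (by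
      intro h
      have := congrFun h k
      simp [Pi.single_apply] at this)
    rw [star_id] at this
    simpa [mulVec_single, dotProduct, Pi.single_apply] using this
  have hquad : ∀ a b : ℝ, 0 ≤ a*a*M j j + a*b*M j k + b*a*M k j + b*b*M k k := by
    intro a b
    have hps := hMinv.posSemidef.dotProduct_mulVec_nonneg (a • (Pi.single j 1 : m → ℝ) + b • (Pi.single k 1 : m → ℝ))
    rw [star_id] at hps
    have : (a • (Pi.single j 1 : m → ℝ) + b • (Pi.single k 1 : m → ℝ)) ⬝ᵥ
        (M *ᵥ (a • (Pi.single j 1 : m → ℝ) + b • (Pi.single k 1 : m → ℝ)))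
        = a*a*M j j + a*b*M j k + b*a*M k j + b*b*M k k := by
      rw [mulVec_add, mulVec_smul, mulVec_smul, mulVec_single, mulVec_single]
      simp only [add_dotProduct, smul_dotProduct, dotProduct_add, dotProduct_smul,
        single_dotProduct, smul_eq_mul, Pi.add_apply, Pi.smul_apply, mul_one,
        MulOpposite.op_one, one_smul, Matrix.col_apply]
      ring
    rw [this] at hps
    exact hps
  have hcs : M k j * M j k ≤ M j j * M k k := by
    have h := hquad (M k k) (-(M k j))
    have hjk : M j k = M k j := hMsym j k
    nlinarith [hMkk]
  -- the vector z
  set z : m → ℝ := fun i => M k k * M i j - M k j * M i k with hzdef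
  have hz1 : z = M k k • (M *ᵥ Pi.single j 1) - M k j • (M *ᵥ Pi.single k 1) := by
    funext a; simp [hzdef, mulVec_single]
  have hAz : A *ᵥ z = fun i => M k k * (Pi.single j 1 : m → ℝ) i - M k j * (Pi.single k 1 : m → ℝ) i := by
    rw [hz1, mulVec_sub, mulVec_smul, mulVec_smul, mulVec_mulVec, mulVec_mulVec,
      A.mul_nonsing_inv hdet, one_mulVec, one_mulVec]
    funext a; simp
  have hge : ∀ a, 0 ≤ z a := by
    apply sign_lemma hA hoff
    intro a ha
    rcases eq_or_ne a j with rfl | haj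
    · exfalso
      have hval : z a = M k k * M a a - M k a * M a k := rfl
      rw [hval] at ha
      nlinarith [hcs]
    · rcases eq_or_ne a k with rfl | hak
      · exfalso
        have hval : z a = M a a * M a j - M a j * M a a := rfl
        rw [hval] at ha
        nlinarith
      · rw [hAz]
        simp [Pi.single_apply, haj, hak]
  have := hge i
  have hik : M i k = M k i := hMsym i k
  simp only [hzdef] at this
  nlinarith

private lemma sherman {A : Matrix m m ℝ} (hA : A.PosDef) (x : m → ℝ) {c : ℝ}
    (hc : 1 + c * (x ⬝ᵥ A⁻¹ *ᵥ x) ≠ 0) :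
    (A + c • vecMulVec x x)⁻¹
      = A⁻¹ - (c / (1 + c * (x ⬝ᵥ A⁻¹ *ᵥ x))) • vecMulVec (A⁻¹ *ᵥ x) (A⁻¹ *ᵥ x) := by
  have hdet : IsUnit A.det := A.isUnit_iff_isUnit_det.mp hA.isUnit
  have hAM : A * A⁻¹ = 1 := A.mul_nonsing_inv hdet
  set M := A⁻¹ with hM
  set z := M *ᵥ x with hz
  set q := x ⬝ᵥ z with hq
  set s := c / (1 + c * q) with hs
  have hMsymm : Mᵀ = M := by
    have := hA.isHermitian.inv
    ext a b
    have h2 := congrFun (congrFun this a) b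
    simpa [conjTranspose_apply] using h2
  have hxM : x ᵥ* M = z := by rw [← mulVec_transpose, hMsymm]
  have hAz : A *ᵥ z = x := by rw [hz, mulVec_mulVec, hAM, one_mulVec]
  apply inv_eq_right_inv
  have expand : (A + c • vecMulVec x x) * (M - s • vecMulVec z z)
      = 1 - s • vecMulVec x z + (c • vecMulVec x z - (c * (s * q)) • vecMulVec x z) := by
    rw [add_mul, mul_sub, mul_sub, hAM]
    rw [Matrix.mul_smul, mul_vecMulVec', hAz]
    rw [Matrix.smul_mul, vecMulVec_mul', hxM]
    rw [Matrix.smul_mul, Matrix.mul_smul, vecMulVec_mul_vecMulVec', ← hq]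
    rw [smul_smul, smul_smul, mul_assoc]
  rw [expand]
  have hcoef : c - c * (s * q) - s = 0 := by
    have : s * (1 + c * q) = c := div_mul_cancel₀ c hc
    nlinarith [this]
  have : c • vecMulVec x z - (c * (s * q)) • vecMulVec x z - s • vecMulVec x z = 0 := by
    rw [← sub_smul, ← sub_smul, hcoef, zero_smul]
  have hrw : (1 : Matrix m m ℝ) - s • vecMulVec x z +
      (c • vecMulVec x z - (c * (s * q)) • vecMulVec x z) =
      1 + (c • vecMulVec x z - (c * (s * q)) • vecMulVec x z - s • vecMulVec x z) := by
    abel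
  rw [hrw, this, add_zero]

private lemma sherman_trace {A : Matrix m m ℝ} (hA : A.PosDef) (x : m → ℝ) {c : ℝ}
    (hc : 1 + c * (x ⬝ᵥ A⁻¹ *ᵥ x) ≠ 0) :
    (A + c • vecMulVec x x)⁻¹.trace
      = A⁻¹.trace - (c / (1 + c * (x ⬝ᵥ A⁻¹ *ᵥ x))) * ((A⁻¹ *ᵥ x) ⬝ᵥ (A⁻¹ *ᵥ x)) := by
  rw [sherman hA x hc, trace_sub, trace_smul, trace_vecMulVec', smul_eq_mul]

private lemma scalar_core {c q r α β γ m0 t : ℝ}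
    (hc : 0 < c) (hα : 0 ≤ α) (hβ : 0 ≤ β) (hγ : 0 ≤ γ) (hq : 0 ≤ q)
    (ht : 0 ≤ t) (htm : t * m0 ≤ 1)
    (h1 : 0 < 1 + c * q) (h2 : 0 < 1 + c * (q - t * α ^ 2))
    (hi : α * γ ≤ m0 * β) (hii : r * α ≤ q * β) :
    c / (1 + c * (q - t * α ^ 2)) * (r - 2 * t * α * β + t ^ 2 * α ^ 2 * γ)
      ≤ c / (1 + c * q) * r := by
  have hαβ : 0 ≤ α * β := mul_nonneg hα hβ
  have key1 : t * (α ^ 2 * γ) ≤ α * β := by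
    have e1 : t * (α * (α * γ)) ≤ t * (α * (m0 * β)) :=
      mul_le_mul_of_nonneg_left (mul_le_mul_of_nonneg_left hi hα) ht
    have e3 : (t * m0) * (α * β) ≤ 1 * (α * β) := mul_le_mul_of_nonneg_right htm hαβ
    nlinarith
  have key2 : c * (α * (r * α)) ≤ c * (α * (q * β)) :=
    mul_le_mul_of_nonneg_left (mul_le_mul_of_nonneg_left hii hα) hc.le
  have key1' : t * (t * (α ^ 2 * γ)) ≤ t * (α * β) := mul_le_mul_of_nonneg_left key1 ht
  have key2' : t * (c * (α * (r * α))) ≤ t * (c * (α * (q * β))) :=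
    mul_le_mul_of_nonneg_left key2 ht
  rw [div_mul_eq_mul_div, div_mul_eq_mul_div, div_le_div_iff₀ h2 h1]
  nlinarith [mul_nonneg ht hαβ, mul_nonneg (mul_nonneg hc.le hq) (mul_nonneg ht hαβ),
    mul_le_mul_of_nonneg_left key1' hc.le,
    mul_le_mul_of_nonneg_left key1' (mul_nonneg hc.le hq),
    mul_nonneg hc.le (mul_nonneg ht hαβ)]

private lemma inv_symm {A : Matrix m m ℝ} (hA : A.PosDef) (a b : m) :
    A⁻¹ a b = A⁻¹ b a := by
  have := hA.isHermitian.inv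
  have h2 := congrFun (congrFun this a) b
  simpa [conjTranspose_apply] using h2.symm

private lemma single_mul_offdiag (a : m) {i j : m} (h : i ≠ j) :
    (Pi.single a 1 : m → ℝ) i * (Pi.single a 1 : m → ℝ) j = 0 := by
  rcases eq_or_ne i a with rfl | hia
  · have : (Pi.single i 1 : m → ℝ) j = 0 := Pi.single_eq_of_ne (Ne.symm h) 1
    rw [this, mul_zero]
  · have : (Pi.single a 1 : m → ℝ) i = 0 := Pi.single_eq_of_ne hia 1
    rw [this, zero_mul]

private lemma core {A : Matrix m m ℝ} (hA : A.PosDef)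
    (hoff : ∀ i j, i ≠ j → A i j ≤ 0) (u u' : m) {c d : ℝ} (hc : 0 < c) (hd : 0 < d) :
    (A + d • vecMulVec (Pi.single u' 1) (Pi.single u' 1))⁻¹.trace
      - ((A + d • vecMulVec (Pi.single u' 1) (Pi.single u' 1))
          + c • vecMulVec (Pi.single u 1) (Pi.single u 1))⁻¹.trace
    ≤ A⁻¹.trace - (A + c • vecMulVec (Pi.single u 1) (Pi.single u 1))⁻¹.trace := by
  set x : m → ℝ := Pi.single u 1 with hxdef
  set y : m → ℝ := Pi.single u' 1 with hydef
  set A' : Matrix m m ℝ := A + d • vecMulVec y y with hA'def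
  have hA' : A'.PosDef := hA.add_posSemidef (vecMulVec_psd y hd.le)
  have hoff' : ∀ i j, i ≠ j → A' i j ≤ 0 := by
    intro i j hij
    have : A' i j = A i j + d * (y i * y j) := by
      simp [hA'def, Matrix.add_apply, vecMulVec_apply]
    rw [this, single_mul_offdiag u' hij, mul_zero, add_zero]
    exact hoff i j hij
  set M : Matrix m m ℝ := A⁻¹ with hM
  set M' : Matrix m m ℝ := A'⁻¹ with hM'
  have hMnn : ∀ i j, 0 ≤ M i j := stieltjes_inv_nonneg hA hoff
  have hM'nn : ∀ i j, 0 ≤ M' i j := stieltjes_inv_nonneg hA' hoff'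
  set q : ℝ := M u u with hqdef
  set α : ℝ := M u' u with hαdef
  set m0 : ℝ := M u' u' with hm0def
  set r : ℝ := ∑ k, M k u * M k u with hrdef
  set β : ℝ := ∑ k, M k u' * M k u with hβdef
  set γ : ℝ := ∑ k, M k u' * M k u' with hγdef
  set t : ℝ := d / (1 + d * m0) with htdef
  have hm0 : 0 ≤ m0 := hMnn u' u'
  have hq0 : 0 ≤ q := hMnn u u
  have hα0 : 0 ≤ α := hMnn u' u
  have hβ0 : 0 ≤ β := Finset.sum_nonneg fun k _ => mul_nonneg (hMnn k u') (hMnn k u)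
  have hγ0 : 0 ≤ γ := Finset.sum_nonneg fun k _ => mul_nonneg (hMnn k u') (hMnn k u')
  have hden : (0:ℝ) < 1 + d * m0 := by nlinarith
  have ht : 0 ≤ t := div_nonneg hd.le hden.le
  have htm : t * m0 ≤ 1 := by
    rw [htdef, div_mul_eq_mul_div, div_le_one hden]
    nlinarith
  -- mulVec with single vectors
  have hMy : M *ᵥ y = fun k => M k u' := by
    rw [hydef]; ext k; simp
  have hMx : M *ᵥ x = fun k => M k u := by
    rw [hxdef]; ext k; simp
  have hyMy : y ⬝ᵥ M *ᵥ y = m0 := by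
    rw [hMy, hydef]; simp [single_dotProduct]; rfl
  have hxMx : x ⬝ᵥ M *ᵥ x = q := by
    rw [hMx, hxdef]; simp [single_dotProduct]; rfl
  have hMxMx : (M *ᵥ x) ⬝ᵥ (M *ᵥ x) = r := by
    rw [hMx, hrdef, dotProduct]
  -- Sherman-Morrison for the update by y
  have hne : 1 + d * (y ⬝ᵥ A⁻¹ *ᵥ y) ≠ 0 := by rw [← hM, hyMy]; exact hden.ne'
  have hM'eq : M' = M - t • vecMulVec (M *ᵥ y) (M *ᵥ y) := by
    rw [hM', hA'def, sherman hA y hne, ← hM, hyMy, htdef]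
  have hM'e : ∀ a b, M' a b = M a b - t * (M a u' * M b u') := by
    intro a b
    rw [hM'eq]
    simp [Matrix.sub_apply, vecMulVec_apply, hMy]
  have hsymuu' : M u u' = α := by rw [hαdef]; exact inv_symm hA u u'
  -- q' and r'
  have hM'x : M' *ᵥ x = fun k => M' k u := by
    rw [hxdef]; ext k; simp
  have hxM'x : x ⬝ᵥ M' *ᵥ x = q - t * α ^ 2 := by
    rw [hM'x, hxdef]
    simp only [single_dotProduct, one_mul]
    rw [hM'e u u, hsymuu', hqdef]
    ring
  have hq'0 : 0 ≤ q - t * α ^ 2 := by rw [← hxM'x, hM'x, hxdef]; simpa using hM'nn u u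
  have hr' : (M' *ᵥ x) ⬝ᵥ (M' *ᵥ x) = r - 2 * t * α * β + t ^ 2 * α ^ 2 * γ := by
    rw [hM'x, dotProduct]
    have hterm : ∀ k, M' k u * M' k u
        = M k u * M k u - 2 * t * α * (M k u' * M k u) + t ^ 2 * α ^ 2 * (M k u' * M k u') := by
      intro k
      rw [hM'e k u, hsymuu']
      ring
    calc ∑ k, M' k u * M' k u
        = ∑ k, (M k u * M k u - 2 * t * α * (M k u' * M k u)
            + t ^ 2 * α ^ 2 * (M k u' * M k u')) := Finset.sum_congr rfl fun k _ => hterm k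
      _ = r - 2 * t * α * β + t ^ 2 * α ^ 2 * γ := by
          rw [Finset.sum_add_distrib, Finset.sum_sub_distrib, ← Finset.mul_sum, ← Finset.mul_sum,
            hrdef, hβdef, hγdef]
  -- path inequalities
  have hi : α * γ ≤ m0 * β := by
    rw [hγdef, hβdef, Finset.mul_sum, Finset.mul_sum]
    apply Finset.sum_le_sum
    intro k _
    have hpath := stieltjes_path_ineq hA hoff k u' u
    rw [← hM] at hpath
    have := mul_le_mul_of_nonneg_left hpath (hMnn k u')
    calc α * (M k u' * M k u') = M k u' * (M k u' * M u' u) := by rw [hαdef]; ring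
      _ ≤ M k u' * (M u' u' * M k u) := this
      _ = m0 * (M k u' * M k u) := by rw [hm0def]; ring
  have hii : r * α ≤ q * β := by
    rw [hrdef, hβdef, Finset.sum_mul, Finset.mul_sum]
    apply Finset.sum_le_sum
    intro k _
    have hpath := stieltjes_path_ineq hA hoff k u u'
    rw [← hM] at hpath
    have := mul_le_mul_of_nonneg_left hpath (hMnn k u)
    have hsym2 : M u' u = M u u' := inv_symm hA u' u
    calc M k u * M k u * α = M k u * (M k u * M u u') := by rw [hαdef, hsym2]; ring
      _ ≤ M k u * (M u u * M k u') := this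
      _ = q * (M k u' * M k u) := by rw [hqdef]; ring
  -- denominators
  have h1 : (0:ℝ) < 1 + c * q := by nlinarith
  have h2 : (0:ℝ) < 1 + c * (q - t * α ^ 2) := by nlinarith
  -- the two trace identities
  have hneR : 1 + c * (x ⬝ᵥ A⁻¹ *ᵥ x) ≠ 0 := by rw [← hM, hxMx]; exact h1.ne'
  have hneL : 1 + c * (x ⬝ᵥ A'⁻¹ *ᵥ x) ≠ 0 := by rw [← hM', hxM'x]; exact h2.ne'
  have eqR : A⁻¹.trace - (A + c • vecMulVec x x)⁻¹.trace
      = c / (1 + c * q) * r := by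
    rw [sherman_trace hA x hneR, ← hM, hxMx, hMxMx]
    ring
  have eqL : A'⁻¹.trace - (A' + c • vecMulVec x x)⁻¹.trace
      = c / (1 + c * (q - t * α ^ 2)) * (r - 2 * t * α * β + t ^ 2 * α ^ 2 * γ) := by
    rw [sherman_trace hA' x hneL, ← hM', hxM'x, hr']
    ring
  have main := scalar_core hc hα0 hβ0 hγ0 hq0 ht htm h1 h2 hi hii
  have hr0 : 0 ≤ r := Finset.sum_nonneg fun k _ => mul_nonneg (hMnn k u) (hMnn k u)
  linarith [eqR ▸ eqL ▸ main, le_of_eq eqR, le_of_eq eqL, main,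
    eqL.le, eqR.le, eqL.ge, eqR.ge]

private lemma sum_subtype_ne {κ : Type*} [Fintype κ] [DecidableEq κ] (v : κ) (F : κ → ℝ)
    (hF : F v = 0) : ∑ i : {u : κ // u ≠ v}, F i.val = ∑ i, F i := by
  calc ∑ i : {u : κ // u ≠ v}, F i.val
      = ∑ x ∈ Finset.univ.erase v, F x :=
        (Finset.sum_subtype (Finset.univ.erase v)
          (fun x => by simp [Finset.mem_erase]) F).symm
    _ = ∑ x, F x := Finset.sum_erase _ hF

end Aux

/-- Theorem 2, supermodularity: Let `L` be the Laplacian of a connected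
weighted undirected graph on `n ≥ 2` vertices, `v` a vertex, and `E_v` a finite set of
candidate new edges, each edge `e` joining `v` to some vertex `uE e ≠ v` with weight
`w e > 0`. With `L(S) := L + Σ_{e∈S} w(e) b_{u_e,v} b_{u_e,v}ᵀ` and
`R(S) := Tr((L(S)_v)⁻¹)`, the function `R` is supermodular: for all `S ⊆ T` and
`e ∉ T`, `R(T) − R(T ∪ {e}) ≤ R(S) − R(S ∪ {e})`. -/
theorem resistance_supermodular {n : ℕ} (hn : 2 ≤ n)
    (L : Matrix (Fin n) (Fin n) ℝ)
    (hsym : L.IsSymm)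
    (hoff : ∀ i j : Fin n, i ≠ j → L i j ≤ 0)
    (hrow : ∀ i : Fin n, ∑ j, L i j = 0)
    (hker : ∀ x : Fin n → ℝ, L *ᵥ x = 0 ↔ ∃ c : ℝ, x = fun _ => c)
    (v : Fin n)
    {ι : Type*} [Fintype ι] [DecidableEq ι]
    (uE : ι → Fin n) (huE : ∀ e : ι, uE e ≠ v)
    (w : ι → ℝ) (hw : ∀ e : ι, 0 < w e)
    (LS : Finset ι → Matrix (Fin n) (Fin n) ℝ)
    (hLS : ∀ S : Finset ι, LS S = L + ∑ e ∈ S, w e •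
      vecMulVec (Pi.single (uE e) 1 - Pi.single v 1) (Pi.single (uE e) 1 - Pi.single v 1))
    (R : Finset ι → ℝ)
    (hR : ∀ S : Finset ι, R S = (((LS S).submatrix
      (fun i : {u : Fin n // u ≠ v} => (i : Fin n))
      (fun j : {u : Fin n // u ≠ v} => (j : Fin n)))⁻¹).trace) :
    ∀ S T : Finset ι, S ⊆ T → ∀ e : ι, e ∉ T →
      R T - R (insert e T) ≤ R S - R (insert e S) := by
  have hLe : ∀ a b, L b a = L a b := by
    intro a b
    have := congrFun (congrFun hsym a) b
    simpa [transpose_apply] using this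
  -- L is positive semidefinite
  have hpsd : ∀ z : Fin n → ℝ, 0 ≤ z ⬝ᵥ L *ᵥ z := by
    intro z
    have key : ∑ i, ∑ j, (-L i j) * (z i - z j)^2 = 2 * (z ⬝ᵥ L *ᵥ z) := by
      have e1 : ∑ i, ∑ j, L i j * z i ^ 2 = 0 := by
        refine Finset.sum_eq_zero fun i _ => ?_
        rw [← Finset.sum_mul, hrow i, zero_mul]
      have e2 : ∑ i : Fin n, ∑ j, L i j * z j ^ 2 = 0 := by
        rw [Finset.sum_comm]
        refine Finset.sum_eq_zero fun j _ => ?_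
        have hcol : ∑ i, L i j = 0 := by
          have : ∑ i, L i j = ∑ i, L j i := Finset.sum_congr rfl fun i _ => hLe j i
          rw [this, hrow j]
        rw [← Finset.sum_mul, hcol, zero_mul]
      have e3 : ∑ i, ∑ j, 2 * (z i * (L i j * z j)) = 2 * (z ⬝ᵥ L *ᵥ z) := by
        calc ∑ i, ∑ j, 2 * (z i * (L i j * z j))
            = ∑ i, 2 * (z i * ∑ j, L i j * z j) := by
              refine Finset.sum_congr rfl fun i _ => ?_
              rw [Finset.mul_sum, Finset.mul_sum]
          _ = 2 * ∑ i, z i * ∑ j, L i j * z j := by rw [Finset.mul_sum]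
          _ = 2 * (z ⬝ᵥ L *ᵥ z) := by simp [dotProduct, mulVec]
      calc ∑ i, ∑ j, (-L i j) * (z i - z j)^2
          = ∑ i, ∑ j, (2 * (z i * (L i j * z j)) - L i j * z i ^ 2 - L i j * z j ^ 2) := by
            refine Finset.sum_congr rfl fun i _ => Finset.sum_congr rfl fun j _ => by ring
        _ = ∑ i, ((∑ j, 2 * (z i * (L i j * z j))) - (∑ j, L i j * z i ^ 2)
              - (∑ j, L i j * z j ^ 2)) := by
            refine Finset.sum_congr rfl fun i _ => by
              rw [Finset.sum_sub_distrib, Finset.sum_sub_distrib]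
        _ = (∑ i, ∑ j, 2 * (z i * (L i j * z j))) - (∑ i, ∑ j, L i j * z i ^ 2)
              - (∑ i, ∑ j, L i j * z j ^ 2) := by
            rw [Finset.sum_sub_distrib, Finset.sum_sub_distrib]
        _ = 2 * (z ⬝ᵥ L *ᵥ z) := by rw [e1, e2, e3]; ring
    have hnn : 0 ≤ ∑ i, ∑ j, (-L i j) * (z i - z j)^2 := by
      refine Finset.sum_nonneg fun i _ => Finset.sum_nonneg fun j _ => ?_
      rcases eq_or_ne i j with rfl | hij
      · simp
      · have := hoff i j hij
        nlinarith [sq_nonneg (z i - z j)]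
    linarith [key ▸ hnn]
  have hLpsd : L.PosSemidef := by
    refine posSemidef_iff_dotProduct_mulVec.mpr ⟨?_, ?_⟩
    · ext a b
      simp only [conjTranspose_apply, star_trivial]
      exact hLe a b
    · intro z
      rw [star_id]
      exact hpsd z
  -- The principal submatrix of L is positive definite
  have hphipd : (L.submatrix
      (fun i : {u : Fin n // u ≠ v} => (i : Fin n))
      (fun j : {u : Fin n // u ≠ v} => (j : Fin n))).PosDef := by
    refine posDef_iff_dotProduct_mulVec.mpr ⟨?_, ?_⟩
    · ext a b
      simp only [conjTranspose_apply, submatrix_apply, star_trivial]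
      exact hLe _ _
    · intro z hz
      rw [star_id]
      set zt : Fin n → ℝ := fun i => if h : i = v then 0 else z ⟨i, h⟩ with hztdef
      have hztv : zt v = 0 := by rw [hztdef]; simp
      have hzt : ∀ i : {u : Fin n // u ≠ v}, zt i.val = z i := by
        intro i
        rw [hztdef]
        exact dif_neg i.prop
      have hLzt : ∀ i : {u : Fin n // u ≠ v},
          (L *ᵥ zt) i.val = ((L.submatrix
            (fun i : {u : Fin n // u ≠ v} => (i : Fin n))
            (fun j : {u : Fin n // u ≠ v} => (j : Fin n))) *ᵥ z) i := by
        intro i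
        show ∑ j, L i.val j * zt j = _
        rw [← sum_subtype_ne v (fun j => L i.val j * zt j)
          (by show L (i : Fin n) v * zt v = 0; rw [hztv, mul_zero])]
        simp only [mulVec, dotProduct, submatrix_apply]
        exact Finset.sum_congr rfl fun j _ => by rw [hzt j]
      have hkey : z ⬝ᵥ ((L.submatrix
            (fun i : {u : Fin n // u ≠ v} => (i : Fin n))
            (fun j : {u : Fin n // u ≠ v} => (j : Fin n))) *ᵥ z) = zt ⬝ᵥ (L *ᵥ zt) := by
        rw [show zt ⬝ᵥ (L *ᵥ zt) = ∑ i, zt i * (L *ᵥ zt) i from rfl,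
          ← sum_subtype_ne v (fun i => zt i * (L *ᵥ zt) i)
            (by show zt v * (L *ᵥ zt) v = 0; rw [hztv, zero_mul])]
        exact Finset.sum_congr rfl fun i _ => by rw [hzt i, hLzt i]
      rw [hkey]
      rcases (hpsd zt).lt_or_eq with h | h
      · exact h
      · exfalso
        have h0 : star zt ⬝ᵥ L *ᵥ zt = 0 := by rw [star_id]; exact h.symm
        have hLz : L *ᵥ zt = 0 := (hLpsd.dotProduct_mulVec_zero_iff zt).mp h0
        obtain ⟨cc, hcc⟩ := (hker zt).mp hLz
        have hcc0 : cc = 0 := by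
          have := congrFun hcc v
          rw [hztv] at this
          exact this.symm
        apply hz
        funext i
        have : zt i.val = 0 := by rw [hcc, hcc0]
        rw [← hzt i, this]
        simp
  -- decomposition of the augmented submatrices
  have hAS : ∀ S : Finset ι, (LS S).submatrix
      (fun i : {u : Fin n // u ≠ v} => (i : Fin n))
      (fun j : {u : Fin n // u ≠ v} => (j : Fin n))
      = L.submatrix (fun i : {u : Fin n // u ≠ v} => (i : Fin n))
          (fun j : {u : Fin n // u ≠ v} => (j : Fin n))
        + ∑ e ∈ S, w e • vecMulVec
            (Pi.single (⟨uE e, huE e⟩ : {u : Fin n // u ≠ v}) 1)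
            (Pi.single (⟨uE e, huE e⟩ : {u : Fin n // u ≠ v}) 1) := by
    intro S
    have hP : ∀ (e : ι) (i : {u : Fin n // u ≠ v}),
        ((Pi.single (uE e) 1 : Fin n → ℝ) - (Pi.single v 1 : Fin n → ℝ)) i.val
          = (Pi.single (⟨uE e, huE e⟩ : {u : Fin n // u ≠ v}) 1
              : {u : Fin n // u ≠ v} → ℝ) i := by
      intro e i
      rcases eq_or_ne i.val (uE e) with h | h
      · have hi : i = ⟨uE e, huE e⟩ := Subtype.ext h
        subst hi
        simp [Pi.single_eq_same, Pi.single_eq_of_ne (huE e)]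
      · have hi : i ≠ ⟨uE e, huE e⟩ := fun hh => h (by rw [hh])
        simp [Pi.single_eq_of_ne h, Pi.single_eq_of_ne i.prop, Pi.single_eq_of_ne hi]
    ext i j
    rw [hLS S]
    simp only [submatrix_apply, Matrix.add_apply, Matrix.sum_apply, Matrix.smul_apply,
      vecMulVec_apply, smul_eq_mul]
    congr 1
    exact Finset.sum_congr rfl fun e _ => by rw [hP e i, hP e j]
  have hpdS : ∀ S : Finset ι, ((LS S).submatrix
      (fun i : {u : Fin n // u ≠ v} => (i : Fin n))
      (fun j : {u : Fin n // u ≠ v} => (j : Fin n))).PosDef := by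
    intro S
    rw [hAS S]
    refine hphipd.add_posSemidef ?_
    exact Finset.sum_induction _ _ (fun a b ha hb => ha.add hb) .zero
      (fun e _ => vecMulVec_psd _ (hw e).le)
  have hoffS : ∀ S : Finset ι, ∀ i j : {u : Fin n // u ≠ v}, i ≠ j →
      ((LS S).submatrix
        (fun i : {u : Fin n // u ≠ v} => (i : Fin n))
        (fun j : {u : Fin n // u ≠ v} => (j : Fin n))) i j ≤ 0 := by
    intro S i j hij
    rw [hAS S]
    simp only [Matrix.add_apply, Matrix.sum_apply, Matrix.smul_apply, vecMulVec_apply,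
      smul_eq_mul, submatrix_apply]
    have hz : ∑ e ∈ S, w e * ((Pi.single (⟨uE e, huE e⟩ : {u : Fin n // u ≠ v}) 1
          : {u : Fin n // u ≠ v} → ℝ) i
        * (Pi.single (⟨uE e, huE e⟩ : {u : Fin n // u ≠ v}) 1
          : {u : Fin n // u ≠ v} → ℝ) j) = 0 :=
      Finset.sum_eq_zero fun e _ => by
        rw [single_mul_offdiag (⟨uE e, huE e⟩ : {u : Fin n // u ≠ v}) hij, mul_zero]
    rw [hz, add_zero]
    exact hoff i.val j.val (Subtype.coe_injective.ne hij)
  have hins : ∀ (S : Finset ι) (e : ι), e ∉ S → (LS (insert e S)).submatrix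
      (fun i : {u : Fin n // u ≠ v} => (i : Fin n))
      (fun j : {u : Fin n // u ≠ v} => (j : Fin n))
      = (LS S).submatrix
          (fun i : {u : Fin n // u ≠ v} => (i : Fin n))
          (fun j : {u : Fin n // u ≠ v} => (j : Fin n))
        + w e • vecMulVec
            (Pi.single (⟨uE e, huE e⟩ : {u : Fin n // u ≠ v}) 1)
            (Pi.single (⟨uE e, huE e⟩ : {u : Fin n // u ≠ v}) 1) := by
    intro S e he
    rw [hAS (insert e S), hAS S, Finset.sum_insert he]
    abel
  -- single-step supermodularity
  have step : ∀ (S : Finset ι) (e f : ι), e ∉ insert f S →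
      R (insert f S) - R (insert e (insert f S)) ≤ R S - R (insert e S) := by
    intro S e f he
    have heS : e ∉ S := fun h => he (Finset.mem_insert_of_mem h)
    by_cases hf : f ∈ S
    · rw [Finset.insert_eq_self.mpr hf]
    · rw [hR (insert f S), hR (insert e (insert f S)), hR S, hR (insert e S),
        hins (insert f S) e he, hins S f hf, hins S e heS]
      exact core (hpdS S) (hoffS S) ⟨uE e, huE e⟩ ⟨uE f, huE f⟩ (hw e) (hw f)
  -- induction
  have mono : ∀ (U S : Finset ι) (e : ι), e ∉ S ∪ U →
      R (S ∪ U) - R (insert e (S ∪ U)) ≤ R S - R (insert e S) := by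
    intro U
    induction U using Finset.induction_on with
    | empty => intro S e he; rw [Finset.union_empty]
    | @insert f U hfU ih =>
      intro S e he
      have h1 : S ∪ insert f U = insert f (S ∪ U) := Finset.union_insert f S U
      rw [h1]
      have he1 : e ∉ insert f (S ∪ U) := by rwa [h1] at he
      have he2 : e ∉ S ∪ U := fun h => he1 (Finset.mem_insert_of_mem h)
      exact le_trans (step (S ∪ U) e f he1) (ih S e he2)
  intro S T hST e heT
  have hT : T = S ∪ (T \ S) := (Finset.union_sdiff_of_subset hST).symm
  rw [hT]
  exact mono (T \ S) S e (by rwa [← hT])
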